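/- For weak compositions a and b, the product of monomial slide polynomials satisfies 𝔐_a · 𝔐_b = ∑_c C_{a,b}^c 𝔐_c, where C_{a,b}^c is the multiplicity of c in the overlapping slide product a ⧢_o b. In particular the monomial slide basis has nonnegative integer structure coefficients. -/

import Mathlib

open MvPolynomial

/-- The monomial `x^b` in `n` variables, for a weak composition recorded as a list. -/
noncomputable def xlist (n : ℕ) (b : List ℕ) : MvPolynomial (Fin n) ℤ :=
  ∏ i : Fin n, X i ^ b.getD (i : ℕ) 0

/-- Dominance order: every partial sum of `b` is at least that of `a`. -/
def DomL (b a : List ℕ) : Prop := ∀ k, (a.take k).sum ≤ (b.take k).sum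

/-- The positive part of a weak composition: delete all zero entries. -/
def posL (b : List ℕ) : List ℕ := b.filter (fun x => x ≠ 0)

/-- The monomial slide polynomial `𝔐_a` of a weak composition `a` of length `n`. -/
noncomputable def MSlide (n : ℕ) (a : List ℕ) : MvPolynomial (Fin n) ℤ :=
  ∑ᶠ (b : List ℕ) (_ : b.length = n ∧ DomL b a ∧ posL b = posL a), xlist n b

/-- Replace the nonzero entries of `c`, in order, by the entries of `v`; keep the zeros
of `c` in place.  (So `fillNZ c a'` is the weak composition `c_{a'}` with the same zero
positions as `c` whose remaining entries are those of `a'` in order.) -/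
def fillNZ : List ℕ → List ℕ → List ℕ
  | [], _ => []
  | 0 :: cs, v => 0 :: fillNZ cs v
  | (_ + 1) :: cs, [] => 0 :: fillNZ cs []
  | (_ + 1) :: cs, w :: ws => w :: fillNZ cs ws

/-- `(a', b') ∈ S(a, b)`: a pair of weak compositions of equal length `k ≤ n` with
`(a')⁺ = a⁺`, `(b')⁺ = b⁺`, `a' ≥ a`, `b' ≥ b` in dominance order, and
`a'_i + b'_i > 0` for all `i ≤ k`. -/
def InS (a b a' b' : List ℕ) : Prop :=
  a'.length = b'.length ∧ a'.length ≤ a.length ∧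
  posL a' = posL a ∧ posL b' = posL b ∧ DomL a' a ∧ DomL b' b ∧
  ∀ i, i < a'.length → 0 < a'.getD i 0 + b'.getD i 0

/-- `c = Bump(a', b')` (up to trailing zeros): `c⁺ = a' + b'` (entrywise sum), the weak
compositions `c_{a'}` and `c_{b'}` (same zero positions as `c`, remaining entries those
of `a'` resp. `b'` in order) satisfy `c_{a'} ≥ a` and `c_{b'} ≥ b`, and `c` is
dominance-least with these properties. -/
def IsBump (a b a' b' c : List ℕ) : Prop :=
  posL c = List.zipWith (· + ·) a' b' ∧
  DomL (fillNZ c a') a ∧ DomL (fillNZ c b') b ∧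
  ∀ c' : List ℕ, posL c' = List.zipWith (· + ·) a' b' →
    DomL (fillNZ c' a') a → DomL (fillNZ c' b') b → DomL c' c

/-- The multiplicity of `c` in the overlapping slide product `a ⧢_o b`: the number of
pairs `(a', b') ∈ S(a, b)` with `Bump(a', b') = c`. -/
noncomputable def ovSlideMult (a b c : List ℕ) : ℕ :=
  Nat.card {p : List ℕ × List ℕ // InS a b p.1 p.2 ∧ IsBump a b p.1 p.2 c}

/-! ### prefix sums and nonzero counts -/

def psL (l : List ℕ) (k : ℕ) : ℕ := (l.take k).sum
def nzc (l : List ℕ) (k : ℕ) : ℕ := (posL (l.take k)).length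

@[simp] lemma posL_nil : posL [] = [] := rfl
@[simp] lemma posL_cons_zero (l : List ℕ) : posL (0 :: l) = posL l := by
  simp [posL]
lemma posL_cons_pos {x : ℕ} (hx : x ≠ 0) (l : List ℕ) : posL (x :: l) = x :: posL l := by
  simp [posL, hx]
@[simp] lemma posL_cons_succ (x : ℕ) (l : List ℕ) : posL ((x+1) :: l) = (x+1) :: posL l := by
  simp [posL]
lemma mem_posL_ne_zero {x : ℕ} {l : List ℕ} (h : x ∈ posL l) : x ≠ 0 := by
  have := List.of_mem_filter h
  simpa using this
lemma sum_posL (l : List ℕ) : (posL l).sum = l.sum := by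
  induction l with
  | nil => rfl
  | cons x xs ih =>
    rcases x with _ | x
    · simpa using ih
    · simp [posL_cons_succ, ih]
lemma length_posL_le (l : List ℕ) : (posL l).length ≤ l.length :=
  List.length_filter_le _ _

@[simp] lemma psL_nil (k : ℕ) : psL [] k = 0 := by simp [psL]
@[simp] lemma psL_zero (l : List ℕ) : psL l 0 = 0 := by simp [psL]
@[simp] lemma psL_cons_succ (x : ℕ) (l : List ℕ) (k : ℕ) :
    psL (x :: l) (k+1) = x + psL l k := by simp [psL]
lemma psL_mono_k (l : List ℕ) {k k' : ℕ} (h : k ≤ k') : psL l k ≤ psL l k' := by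
  induction l generalizing k k' with
  | nil => simp
  | cons x xs ih =>
    rcases k' with _ | k'
    · interval_cases k; simp
    rcases k with _ | k
    · simp
    · simpa using ih (Nat.succ_le_succ_iff.mp h)
lemma psL_eq_sum_of_le {l : List ℕ} {k : ℕ} (h : l.length ≤ k) : psL l k = l.sum := by
  simp [psL, List.take_of_length_le h]
lemma psL_le_sum (l : List ℕ) (k : ℕ) : psL l k ≤ l.sum := by
  rcases le_total l.length k with h | h
  · rw [psL_eq_sum_of_le h]
  · calc psL l k ≤ psL l l.length := psL_mono_k l h
      _ = l.sum := psL_eq_sum_of_le le_rfl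
lemma psL_lt_psL {v : List ℕ} (hv : ∀ x ∈ v, x ≠ 0) {m m' : ℕ}
    (h : m < m') (h2 : m' ≤ v.length) : psL v m < psL v m' := by
  induction v generalizing m m' with
  | nil => simp at h2; omega
  | cons x xs ih =>
    have hx : x ≠ 0 := hv x (by simp)
    rcases m' with _ | m'
    · omega
    rcases m with _ | m
    · have : psL xs m' ≤ psL xs m' := le_rfl
      simp only [psL_zero, psL_cons_succ]
      omega
    · simp only [psL_cons_succ]
      have := ih (fun y hy => hv y (by simp [hy])) (Nat.succ_lt_succ_iff.mp h)
        (by simpa using h2)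
      omega

@[simp] lemma nzc_nil (k : ℕ) : nzc [] k = 0 := by simp [nzc]
@[simp] lemma nzc_zero (l : List ℕ) : nzc l 0 = 0 := by simp [nzc]
@[simp] lemma nzc_cons_zero (l : List ℕ) (k : ℕ) : nzc (0 :: l) (k+1) = nzc l k := by
  simp [nzc]
lemma nzc_cons_pos {x : ℕ} (hx : x ≠ 0) (l : List ℕ) (k : ℕ) :
    nzc (x :: l) (k+1) = nzc l k + 1 := by
  simp [nzc, posL_cons_pos hx]
lemma nzc_le_len_posL (l : List ℕ) (k : ℕ) : nzc l k ≤ (posL l).length := by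
  induction l generalizing k with
  | nil => simp
  | cons x xs ih =>
    rcases k with _ | k
    · simp
    rcases x with _ | x
    · simpa using ih k
    · rw [nzc_cons_pos (by omega)]
      simp only [posL_cons_succ, List.length_cons]
      exact Nat.succ_le_succ (ih k)
lemma nzc_eq_of_len_le {l : List ℕ} {k : ℕ} (h : l.length ≤ k) :
    nzc l k = (posL l).length := by
  simp [nzc, List.take_of_length_le h]
lemma nzc_mono (l : List ℕ) {k k' : ℕ} (h : k ≤ k') : nzc l k ≤ nzc l k' := by
  induction l generalizing k k' with
  | nil => simp
  | cons x xs ih =>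
    rcases k' with _ | k'
    · interval_cases k; simp
    rcases k with _ | k
    · simp
    rcases x with _ | x
    · simpa using ih (Nat.succ_le_succ_iff.mp h)
    · rw [nzc_cons_pos (by omega), nzc_cons_pos (by omega)]
      exact Nat.succ_le_succ (ih (Nat.succ_le_succ_iff.mp h))
lemma nzc_succ_le (l : List ℕ) (k : ℕ) : nzc l (k+1) ≤ nzc l k + 1 := by
  induction l generalizing k with
  | nil => simp
  | cons x xs ih =>
    rcases x with _ | x
    · rcases k with _ | k
      · simp
      · simpa using ih k
    · rcases k with _ | k
      · rw [nzc_cons_pos (by omega)]; simp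
      · rw [nzc_cons_pos (by omega), nzc_cons_pos (by omega)]
        exact Nat.succ_le_succ (ih k)

/-! ### fillNZ and key identities -/

@[simp] lemma fillNZ_nil (v : List ℕ) : fillNZ [] v = [] := rfl
@[simp] lemma fillNZ_cons_zero (cs v : List ℕ) : fillNZ (0 :: cs) v = 0 :: fillNZ cs v := rfl
@[simp] lemma fillNZ_cons_succ_nil (x : ℕ) (cs : List ℕ) :
    fillNZ ((x+1) :: cs) [] = 0 :: fillNZ cs [] := rfl
@[simp] lemma fillNZ_cons_succ_cons (x : ℕ) (cs : List ℕ) (w : ℕ) (ws : List ℕ) :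
    fillNZ ((x+1) :: cs) (w :: ws) = w :: fillNZ cs ws := rfl

@[simp] lemma length_fillNZ (c v : List ℕ) : (fillNZ c v).length = c.length := by
  induction c generalizing v with
  | nil => rfl
  | cons x cs ih =>
    rcases x with _ | x
    · simp [ih]
    · rcases v with _ | ⟨w, ws⟩ <;> simp [ih]

lemma psL_fillNZ (c v : List ℕ) (k : ℕ) : psL (fillNZ c v) k = psL v (nzc c k) := by
  induction c generalizing v k with
  | nil => simp
  | cons x cs ih =>
    rcases k with _ | k
    · simp
    rcases x with _ | x
    · simp [ih]
    · rcases v with _ | ⟨w, ws⟩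
      · simp only [fillNZ_cons_succ_nil, psL_cons_succ, ih, psL_nil, Nat.zero_add]
      · rw [fillNZ_cons_succ_cons, psL_cons_succ, nzc_cons_pos (by omega), psL_cons_succ, ih]

lemma psL_posL (l : List ℕ) (k : ℕ) : psL l k = psL (posL l) (nzc l k) := by
  induction l generalizing k with
  | nil => simp
  | cons x xs ih =>
    rcases k with _ | k
    · simp
    rcases x with _ | x
    · simpa using ih k
    · rw [psL_cons_succ, nzc_cons_pos (by omega), posL_cons_succ, psL_cons_succ, ih]

lemma DomL_iff (d c : List ℕ) : DomL d c ↔ ∀ k, psL c k ≤ psL d k := Iff.rfl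

lemma DomL_refl (c : List ℕ) : DomL c c := fun _ => le_rfl
lemma DomL_trans {c d e : List ℕ} (h1 : DomL d c) (h2 : DomL e d) : DomL e c :=
  fun k => (h1 k).trans (h2 k)

lemma nzc_le_of_dom {d c : List ℕ} (hp : posL d = posL c) (hd : DomL d c) (k : ℕ) :
    nzc c k ≤ nzc d k := by
  by_contra hlt
  push_neg at hlt
  have h1 : psL c k = psL (posL c) (nzc c k) := psL_posL c k
  have h2 : psL d k = psL (posL c) (nzc d k) := by rw [psL_posL d k, hp]
  have hstrict : psL (posL c) (nzc d k) < psL (posL c) (nzc c k) :=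
    psL_lt_psL (fun x hx => mem_posL_ne_zero hx) hlt (nzc_le_len_posL c k)
  have h3 : psL c k ≤ psL d k := hd k
  omega

lemma dom_of_nzc {d c : List ℕ} (hp : posL d = posL c) (h : ∀ k, nzc c k ≤ nzc d k) :
    DomL d c := by
  intro k
  rw [show (c.take k).sum = psL c k from rfl, show (d.take k).sum = psL d k from rfl,
    psL_posL c k, psL_posL d k, hp]
  exact psL_mono_k _ (h k)

lemma eq_of_psL_eq {c d : List ℕ} (hlen : c.length = d.length)
    (h : ∀ k, psL c k = psL d k) : c = d := by
  induction c generalizing d with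
  | nil => cases d with
    | nil => rfl
    | cons y ys => simp at hlen
  | cons x xs ih =>
    cases d with
    | nil => simp at hlen
    | cons y ys =>
      have h1 := h 1
      simp only [psL_cons_succ, psL_zero, Nat.add_zero] at h1
      have : xs = ys := by
        apply ih (by simpa using hlen)
        intro k
        have := h (k+1)
        simp only [psL_cons_succ] at this
        omega
      rw [h1, this]

lemma dom_antisymm {c d : List ℕ} (hlen : c.length = d.length)
    (h1 : DomL c d) (h2 : DomL d c) : c = d :=
  eq_of_psL_eq hlen (fun k => le_antisymm (h2 k) (h1 k))

/-! ### zipWith lemmas -/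

lemma psL_zipWith_add {u w : List ℕ} (h : u.length = w.length) (k : ℕ) :
    psL (List.zipWith (· + ·) u w) k = psL u k + psL w k := by
  induction u generalizing w k with
  | nil => cases w with
    | nil => simp
    | cons y ys => simp at h
  | cons x xs ih =>
    cases w with
    | nil => simp at h
    | cons y ys =>
      rcases k with _ | k
      · simp
      · simp only [List.zipWith_cons_cons, psL_cons_succ, ih (by simpa using h)]
        ring

lemma sum_zipWith_add {u w : List ℕ} (h : u.length = w.length) :
    (List.zipWith (· + ·) u w).sum = u.sum + w.sum := by
  have := psL_zipWith_add h (u.length)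
  rwa [psL_eq_sum_of_le (by simp [h]), psL_eq_sum_of_le le_rfl,
    psL_eq_sum_of_le (le_of_eq h.symm)] at this

lemma getD_zipWith_add {u w : List ℕ} {i : ℕ} (hu : i < u.length) (hw : i < w.length) :
    (List.zipWith (· + ·) u w).getD i 0 = u.getD i 0 + w.getD i 0 := by
  induction u generalizing w i with
  | nil => simp at hu
  | cons x xs ih =>
    cases w with
    | nil => simp at hw
    | cons y ys =>
      rcases i with _ | i
      · simp
      · simp only [List.zipWith_cons_cons, List.getD_cons_succ]
        exact ih (by simpa using hu) (by simpa using hw)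

lemma fillNZ_zipWith {c u w : List ℕ} (h : u.length = w.length) :
    List.zipWith (· + ·) (fillNZ c u) (fillNZ c w) = fillNZ c (List.zipWith (· + ·) u w) := by
  induction c generalizing u w with
  | nil => simp
  | cons x cs ih =>
    rcases x with _ | x
    · simp [ih h]
    · cases u with
      | nil =>
        cases w with
        | nil =>
          simp only [fillNZ_cons_succ_nil, List.zipWith_cons_cons,
            ih (rfl : ([]:List ℕ).length = ([]:List ℕ).length)]
          simp
        | cons y ys => simp at h
      | cons z zs =>
        cases w with
        | nil => simp at h
        | cons y ys => simp [ih (by simpa using h)]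

lemma fillNZ_posL_self (c : List ℕ) : fillNZ c (posL c) = c := by
  induction c with
  | nil => rfl
  | cons x cs ih =>
    rcases x with _ | x
    · simp [ih]
    · simp [posL_cons_succ, ih]

lemma posL_fillNZ {c v : List ℕ} (h : v.length ≤ (posL c).length) :
    posL (fillNZ c v) = posL v := by
  induction c generalizing v with
  | nil =>
    have : v = [] := by
      simpa using List.length_eq_zero_iff.mp (Nat.le_zero.mp (by simpa using h))
    simp [this]
  | cons x cs ih =>
    rcases x with _ | x
    · simpa using ih (by simpa using h)
    · cases v with
      | nil => simpa using (ih (by simp)).trans posL_nil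
      | cons w ws =>
        rcases w with _ | w
        · simpa using ih (by simpa using h)
        · rw [fillNZ_cons_succ_cons, posL_cons_succ, posL_cons_succ,
            ih (by simpa using h)]

lemma nzc_fillNZ {c v : List ℕ} (hv : ∀ x ∈ v, x ≠ 0)
    (h : v.length = (posL c).length) (k : ℕ) : nzc (fillNZ c v) k = nzc c k := by
  induction c generalizing v k with
  | nil => simp
  | cons x cs ih =>
    rcases k with _ | k
    · simp
    rcases x with _ | x
    · simpa using ih hv (by simpa using h) k
    · cases v with
      | nil => simp at h
      | cons w ws =>
        have hw : w ≠ 0 := hv w (by simp)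
        rw [fillNZ_cons_succ_cons, nzc_cons_pos hw, nzc_cons_pos (by omega),
          ih (fun y hy => hv y (by simp [hy])) (by simpa using h) k]
/-! ### extrNZ : extract entries at nonzero positions -/

def extrNZ : List ℕ → List ℕ → List ℕ
  | [], _ => []
  | _ :: _, [] => []
  | 0 :: cs, _ :: ws => extrNZ cs ws
  | (_+1) :: cs, w :: ws => w :: extrNZ cs ws

@[simp] lemma extrNZ_nil (b : List ℕ) : extrNZ [] b = [] := rfl
@[simp] lemma extrNZ_nil' (x : ℕ) (c : List ℕ) : extrNZ (x :: c) [] = [] := by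
  rcases x with _ | x <;> rfl
@[simp] lemma extrNZ_cons_zero (cs : List ℕ) (w : ℕ) (ws : List ℕ) :
    extrNZ (0 :: cs) (w :: ws) = extrNZ cs ws := rfl
@[simp] lemma extrNZ_cons_succ (x : ℕ) (cs : List ℕ) (w : ℕ) (ws : List ℕ) :
    extrNZ ((x+1) :: cs) (w :: ws) = w :: extrNZ cs ws := rfl

lemma length_extrNZ {c b : List ℕ} (h : c.length = b.length) :
    (extrNZ c b).length = (posL c).length := by
  induction c generalizing b with
  | nil => simp
  | cons x cs ih =>
    cases b with
    | nil => simp at h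
    | cons w ws =>
      rcases x with _ | x
      · simpa using ih (by simpa using h)
      · simpa using ih (by simpa using h)

/-- The zero-inheritance condition. -/
def ZC (c b : List ℕ) : Prop := List.Forall₂ (fun ci bi => ci = 0 → bi = 0) c b

lemma zc_zipWith_left {b1 b2 : List ℕ} (h : b1.length = b2.length) :
    ZC (List.zipWith (· + ·) b1 b2) b1 := by
  induction b1 generalizing b2 with
  | nil => simp [ZC]
  | cons x xs ih =>
    cases b2 with
    | nil => simp at h
    | cons y ys =>
      rw [List.zipWith_cons_cons]
      refine List.Forall₂.cons ?_ (ih (by simpa using h))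
      intro hxy
      omega

lemma zc_zipWith_right {b1 b2 : List ℕ} (h : b1.length = b2.length) :
    ZC (List.zipWith (· + ·) b1 b2) b2 := by
  rw [List.zipWith_comm_of_comm (fun x y => Nat.add_comm x y)]
  exact zc_zipWith_left h.symm

lemma posL_extrNZ {c b : List ℕ} (h : ZC c b) : posL (extrNZ c b) = posL b := by
  induction h with
  | nil => simp
  | @cons ci bi cs bs hz _ ih =>
    rcases ci with _ | ci
    · rw [hz rfl] at *
      simpa using ih
    · rcases bi with _ | bi
      · simpa using ih
      · rw [extrNZ_cons_succ, posL_cons_succ, posL_cons_succ, ih]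

lemma dom_extrNZ {c b : List ℕ} (h : ZC c b) : DomL (extrNZ c b) b := by
  rw [DomL_iff]
  induction h with
  | nil => simp
  | @cons ci bi cs bs hz _ ih =>
    intro k
    rcases k with _ | k
    · simp
    rcases ci with _ | ci
    · rw [hz rfl, extrNZ_cons_zero, psL_cons_succ]
      have h1 := ih k
      have h2 := psL_mono_k (extrNZ cs bs) (show k ≤ k + 1 by omega)
      omega
    · rcases bi with _ | bi <;>
      · rw [extrNZ_cons_succ, psL_cons_succ, psL_cons_succ]
        have h1 := ih k
        omega

lemma fillNZ_extrNZ {c b : List ℕ} (h : ZC c b) : fillNZ c (extrNZ c b) = b := by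
  induction h with
  | nil => simp
  | @cons ci bi cs bs hz _ ih =>
    rcases ci with _ | ci
    · rw [hz rfl]
      simp [ih]
    · rcases bi with _ | bi
      · cases hb : extrNZ cs bs with
        | nil => rw [extrNZ_cons_succ, fillNZ_cons_succ_cons, ih]
        | cons u us => rw [extrNZ_cons_succ, fillNZ_cons_succ_cons, ih]
      · rw [extrNZ_cons_succ, fillNZ_cons_succ_cons, ih]

lemma extrNZ_fillNZ {c v : List ℕ} (h : v.length = (posL c).length) :
    extrNZ c (fillNZ c v) = v := by
  induction c generalizing v with
  | nil =>
    have : v = [] := List.length_eq_zero_iff.mp (by simpa using h)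
    simp [this]
  | cons x cs ih =>
    rcases x with _ | x
    · simpa using ih (by simpa using h)
    · cases v with
      | nil => simp at h
      | cons w ws => simpa using ih (by simpa using h)

lemma extrNZ_zipWith {c u w : List ℕ} (hu : c.length = u.length) (hw : c.length = w.length) :
    List.zipWith (· + ·) (extrNZ c u) (extrNZ c w) = extrNZ c (List.zipWith (· + ·) u w) := by
  induction c generalizing u w with
  | nil => simp
  | cons x cs ih =>
    cases u with
    | nil => simp at hu
    | cons a as =>
      cases w with
      | nil => simp at hw
      | cons b bs =>
        rcases x with _ | x
        · simpa using ih (by simpa using hu) (by simpa using hw)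
        · simpa using ih (by simpa using hu) (by simpa using hw)

lemma extrNZ_self (c : List ℕ) : extrNZ c c = posL c := by
  induction c with
  | nil => rfl
  | cons x cs ih =>
    rcases x with _ | x
    · simpa using ih
    · simpa [posL_cons_succ] using ih

lemma getD_pos_of_lt_length_posL {c : List ℕ} {i : ℕ} (h : i < (posL c).length) :
    (posL c).getD i 0 ≠ 0 := by
  rw [List.getD_eq_getElem _ _ h]
  exact mem_posL_ne_zero (List.getElem_mem h)
/-! ### building a list from a nonzero-count function -/

def maskOf (g : ℕ → ℕ) (n : ℕ) : List ℕ :=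
  (List.range n).map (fun i => if g (i+1) = g i + 1 then 1 else 0)

def ofG (v : List ℕ) (g : ℕ → ℕ) (n : ℕ) : List ℕ := fillNZ (maskOf g n) v

structure GoodG (v : List ℕ) (n : ℕ) (g : ℕ → ℕ) : Prop where
  zero : g 0 = 0
  mono : Monotone g
  step : ∀ k, g (k+1) ≤ g k + 1
  top : g n = v.length

@[simp] lemma length_maskOf (g : ℕ → ℕ) (n : ℕ) : (maskOf g n).length = n := by
  simp [maskOf]

lemma maskOf_getD {g : ℕ → ℕ} {n k : ℕ} (h : k < n) :
    (maskOf g n).getD k 0 = if g (k+1) = g k + 1 then 1 else 0 := by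
  rw [List.getD_eq_getElem _ _ (by simpa using h)]
  simp [maskOf]

lemma nzc_succ (l : List ℕ) {k : ℕ} (h : k < l.length) :
    nzc l (k+1) = nzc l k + (if l.getD k 0 = 0 then 0 else 1) := by
  induction l generalizing k with
  | nil => simp at h
  | cons x xs ih =>
    rcases k with _ | k
    · rcases x with _ | x
      · simp
      · rw [nzc_cons_pos (by omega)]
        simp
    · rcases x with _ | x
      · simpa using ih (by simpa using h)
      · rw [nzc_cons_pos (by omega), nzc_cons_pos (by omega)]
        have := ih (show k < xs.length by simpa using h)
        simp only [List.getD_cons_succ]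
        omega

lemma nzc_maskOf {v : List ℕ} {n : ℕ} {g : ℕ → ℕ} (hg : GoodG v n g) {k : ℕ} (hk : k ≤ n) :
    nzc (maskOf g n) k = g k := by
  induction k with
  | zero => simp [hg.zero]
  | succ k ih =>
    have hk' : k < n := by omega
    rw [nzc_succ _ (by simpa using hk'), maskOf_getD hk', ih (by omega)]
    by_cases hstep : g (k+1) = g k + 1
    · simp [hstep]
    · rw [if_neg hstep, if_pos rfl]
      have h1 : g k ≤ g (k+1) := hg.mono (Nat.le_succ k)
      have h2 := hg.step k
      omega

lemma nzc_gt_len {l : List ℕ} {k : ℕ} (h : l.length ≤ k) :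
    nzc l k = nzc l l.length := by
  rw [nzc_eq_of_len_le h, nzc_eq_of_len_le le_rfl]

lemma posL_eq_self {v : List ℕ} (hv : ∀ x ∈ v, x ≠ 0) : posL v = v := by
  simp only [posL]
  rw [List.filter_eq_self]
  intro x hx
  simpa using hv x hx

lemma length_posL_maskOf {v : List ℕ} {n : ℕ} {g : ℕ → ℕ} (hg : GoodG v n g) :
    (posL (maskOf g n)).length = v.length := by
  have h1 : nzc (maskOf g n) n = (posL (maskOf g n)).length := nzc_eq_of_len_le (by simp)
  rw [← h1, nzc_maskOf hg le_rfl, hg.top]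

@[simp] lemma length_ofG (v : List ℕ) (g : ℕ → ℕ) (n : ℕ) : (ofG v g n).length = n := by
  simp [ofG]

lemma posL_ofG {v : List ℕ} {n : ℕ} {g : ℕ → ℕ} (hv : ∀ x ∈ v, x ≠ 0) (hg : GoodG v n g) :
    posL (ofG v g n) = v := by
  rw [ofG, posL_fillNZ (le_of_eq (length_posL_maskOf hg).symm), posL_eq_self hv]

lemma nzc_ofG {v : List ℕ} {n : ℕ} {g : ℕ → ℕ} (hv : ∀ x ∈ v, x ≠ 0) (hg : GoodG v n g)
    {k : ℕ} (hk : k ≤ n) : nzc (ofG v g n) k = g k := by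
  rw [ofG, nzc_fillNZ hv (length_posL_maskOf hg).symm, nzc_maskOf hg hk]

lemma nzc_ofG_ge {v : List ℕ} {n : ℕ} {g : ℕ → ℕ} (hv : ∀ x ∈ v, x ≠ 0) (hg : GoodG v n g)
    {k : ℕ} (hk : n ≤ k) : nzc (ofG v g n) k = v.length := by
  rw [nzc_gt_len (by simpa using hk), show (ofG v g n).length = n from by simp,
    nzc_ofG hv hg le_rfl, hg.top]
/-! ### the candidate set and the Bump minimum -/

lemma finite_bddList (n M : ℕ) : {l : List ℕ | l.length ≤ n ∧ ∀ x ∈ l, x ≤ M}.Finite := by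
  induction n with
  | zero =>
    apply Set.Finite.subset (Set.finite_singleton ([] : List ℕ))
    rintro l ⟨hl, -⟩
    simp [List.length_eq_zero_iff.mp (Nat.le_zero.mp hl)]
  | succ n ih =>
    apply Set.Finite.subset ((Set.finite_singleton ([] : List ℕ)).union
      (Set.Finite.image2 List.cons (Set.finite_Iic M) ih))
    rintro l ⟨hl, hbdd⟩
    cases l with
    | nil => exact Or.inl rfl
    | cons x xs =>
      refine Or.inr (Set.mem_image2_of_mem ?_ ?_)
      · exact hbdd x (by simp)
      · exact ⟨by simpa using hl, fun y hy => hbdd y (by simp [hy])⟩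

def Cand (n : ℕ) (a b a' b' : List ℕ) (c : List ℕ) : Prop :=
  c.length = n ∧ posL c = List.zipWith (· + ·) a' b' ∧
  DomL (fillNZ c a') a ∧ DomL (fillNZ c b') b

section BumpSec

variable {n : ℕ} {a b a' b' : List ℕ}

lemma hS_lenv (hS : InS a b a' b') : (List.zipWith (· + ·) a' b').length = a'.length := by
  simp [hS.1]

lemma hS_vpos (hS : InS a b a' b') : ∀ x ∈ List.zipWith (· + ·) a' b', x ≠ 0 := by
  intro x hx
  obtain ⟨i, hi, hix⟩ := List.mem_iff_getElem.mp hx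
  have hi' : i < a'.length := by
    have := hS_lenv hS
    omega
  have hgd : (List.zipWith (· + ·) a' b').getD i 0 = x := by
    rw [List.getD_eq_getElem _ _ hi, hix]
  rw [getD_zipWith_add hi' (hS.1 ▸ hi')] at hgd
  have := hS.2.2.2.2.2.2 i hi'
  omega

lemma hS_suma (hS : InS a b a' b') : a'.sum = a.sum := by
  rw [← sum_posL a', ← sum_posL a, hS.2.2.1]

lemma hS_sumb (hS : InS a b a' b') : b'.sum = b.sum := by
  rw [← sum_posL b', ← sum_posL b, hS.2.2.2.1]

/-- Any candidate (of any length) has all its nonzero entries among the first `n`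
positions. -/
lemma cand_nzc_top (hS : InS a b a' b') (ha : a.length = n) (hb : b.length = n)
    {c' : List ℕ} (h1 : posL c' = List.zipWith (· + ·) a' b')
    (h2 : DomL (fillNZ c' a') a) (h3 : DomL (fillNZ c' b') b) :
    nzc c' n = (List.zipWith (· + ·) a' b').length := by
  have hmle : nzc c' n ≤ (List.zipWith (· + ·) a' b').length :=
    h1 ▸ nzc_le_len_posL c' n
  have h2n : psL a n ≤ psL a' (nzc c' n) := by
    have := h2 n
    rw [show (a.take n).sum = psL a n from rfl,
      show ((fillNZ c' a').take n).sum = psL (fillNZ c' a') n from rfl, psL_fillNZ] at this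
    exact this
  have h3n : psL b n ≤ psL b' (nzc c' n) := by
    have := h3 n
    rw [show (b.take n).sum = psL b n from rfl,
      show ((fillNZ c' b').take n).sum = psL (fillNZ c' b') n from rfl, psL_fillNZ] at this
    exact this
  rw [psL_eq_sum_of_le (le_of_eq ha)] at h2n
  rw [psL_eq_sum_of_le (le_of_eq hb)] at h3n
  have hsa := hS_suma hS
  have hsb := hS_sumb hS
  have hzip : psL (List.zipWith (· + ·) a' b') (nzc c' n)
      = psL a' (nzc c' n) + psL b' (nzc c' n) := psL_zipWith_add hS.1 _
  have hzipsum : (List.zipWith (· + ·) a' b').sum = a'.sum + b'.sum := sum_zipWith_add hS.1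
  have hle : psL (List.zipWith (· + ·) a' b') (nzc c' n)
      ≤ (List.zipWith (· + ·) a' b').sum := psL_le_sum _ _
  by_contra hne
  have hlt : nzc c' n < (List.zipWith (· + ·) a' b').length := lt_of_le_of_ne hmle hne
  have hstrict : psL (List.zipWith (· + ·) a' b') (nzc c' n)
      < psL (List.zipWith (· + ·) a' b') (List.zipWith (· + ·) a' b').length :=
    psL_lt_psL (hS_vpos hS) hlt le_rfl
  rw [psL_eq_sum_of_le le_rfl] at hstrict
  omega

lemma cand_nzc_ge (hS : InS a b a' b') {c : List ℕ} (hc : Cand n a b a' b' c)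
    {k : ℕ} (hk : n ≤ k) : nzc c k = (List.zipWith (· + ·) a' b').length := by
  rw [nzc_gt_len (hc.1 ▸ hk), hc.1, ← hc.2.1, nzc_eq_of_len_le (le_of_eq hc.1)]

/-- Build a candidate from a good count function satisfying the dominance conditions. -/
lemma cand_ofG (hS : InS a b a' b') (ha : a.length = n) (hb : b.length = n)
    {g : ℕ → ℕ} (hg : GoodG (List.zipWith (· + ·) a' b') n g)
    (hga : ∀ k, k ≤ n → psL a k ≤ psL a' (g k))
    (hgb : ∀ k, k ≤ n → psL b k ≤ psL b' (g k)) :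
    Cand n a b a' b' (ofG (List.zipWith (· + ·) a' b') g n) := by
  refine ⟨by simp, posL_ofG (hS_vpos hS) hg, ?_, ?_⟩
  · intro k
    rw [show ((fillNZ (ofG (List.zipWith (· + ·) a' b') g n) a').take k).sum
        = psL (fillNZ (ofG (List.zipWith (· + ·) a' b') g n) a') k from rfl,
      show (a.take k).sum = psL a k from rfl, psL_fillNZ]
    rcases le_or_gt k n with hk | hk
    · rw [nzc_ofG (hS_vpos hS) hg hk]; exact hga k hk
    · rw [nzc_ofG_ge (hS_vpos hS) hg (le_of_lt hk), ← hg.top]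
      have h1 : psL a k = a.sum := psL_eq_sum_of_le (by omega)
      have h2 := hga n le_rfl
      rw [psL_eq_sum_of_le (le_of_eq ha)] at h2
      omega
  · intro k
    rw [show ((fillNZ (ofG (List.zipWith (· + ·) a' b') g n) b').take k).sum
        = psL (fillNZ (ofG (List.zipWith (· + ·) a' b') g n) b') k from rfl,
      show (b.take k).sum = psL b k from rfl, psL_fillNZ]
    rcases le_or_gt k n with hk | hk
    · rw [nzc_ofG (hS_vpos hS) hg hk]; exact hgb k hk
    · rw [nzc_ofG_ge (hS_vpos hS) hg (le_of_lt hk), ← hg.top]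
      have h1 : psL b k = b.sum := psL_eq_sum_of_le (by omega)
      have h2 := hgb n le_rfl
      rw [psL_eq_sum_of_le (le_of_eq hb)] at h2
      omega

lemma cand_nonempty (hS : InS a b a' b') (ha : a.length = n) (hb : b.length = n) :
    ∃ c, Cand n a b a' b' c := by
  have hvlen : (List.zipWith (· + ·) a' b').length = a'.length := hS_lenv hS
  have hlen' : a'.length ≤ n := ha ▸ hS.2.1
  refine ⟨ofG (List.zipWith (· + ·) a' b')
    (fun k => min k (List.zipWith (· + ·) a' b').length) n, cand_ofG hS ha hb ?_ ?_ ?_⟩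
  · refine ⟨by simp, fun i j hij => ?_, fun k => ?_, ?_⟩
    · show min i _ ≤ min j _; omega
    · show min (k+1) _ ≤ min k _ + 1; omega
    · show min n (List.zipWith (· + ·) a' b').length = (List.zipWith (· + ·) a' b').length
      rw [hvlen]
      exact min_eq_right hlen'
  · intro k hk
    rcases le_or_gt k (List.zipWith (· + ·) a' b').length with h | h
    · rw [min_eq_left h]; exact hS.2.2.2.2.1 k
    · rw [min_eq_right (le_of_lt h)]
      have h1 : psL a' (List.zipWith (· + ·) a' b').length = a'.sum :=
        psL_eq_sum_of_le (le_of_eq hvlen.symm)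
      rw [h1, hS_suma hS]
      exact psL_le_sum a k
  · intro k hk
    rcases le_or_gt k (List.zipWith (· + ·) a' b').length with h | h
    · rw [min_eq_left h]; exact hS.2.2.2.2.2.1 k
    · rw [min_eq_right (le_of_lt h)]
      have h1 : psL b' (List.zipWith (· + ·) a' b').length = b'.sum :=
        psL_eq_sum_of_le (by rw [hvlen, hS.1])
      rw [h1, hS_sumb hS]
      exact psL_le_sum b k

/-- The merge of two candidates: a candidate whose count function is the pointwise min. -/
lemma cand_merge (hS : InS a b a' b') (ha : a.length = n) (hb : b.length = n)
    {c1 c2 : List ℕ} (h1 : Cand n a b a' b' c1) (h2 : Cand n a b a' b' c2) :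
    Cand n a b a' b' (ofG (List.zipWith (· + ·) a' b')
      (fun k => min (nzc c1 k) (nzc c2 k)) n) ∧
    GoodG (List.zipWith (· + ·) a' b') n (fun k => min (nzc c1 k) (nzc c2 k)) := by
  have hg : GoodG (List.zipWith (· + ·) a' b') n (fun k => min (nzc c1 k) (nzc c2 k)) := by
    refine ⟨by simp, fun i j hij => ?_, fun k => ?_, ?_⟩
    · have t1 := nzc_mono c1 hij
      have t2 := nzc_mono c2 hij
      show min (nzc c1 i) (nzc c2 i) ≤ min (nzc c1 j) (nzc c2 j)
      omega
    · have t1 := nzc_succ_le c1 k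
      have t2 := nzc_succ_le c2 k
      show min (nzc c1 (k+1)) (nzc c2 (k+1)) ≤ min (nzc c1 k) (nzc c2 k) + 1
      omega
    · show min (nzc c1 n) (nzc c2 n) = _
      rw [cand_nzc_ge hS h1 le_rfl, cand_nzc_ge hS h2 le_rfl]
      simp
  refine ⟨cand_ofG hS ha hb hg ?_ ?_, hg⟩
  · intro k hk
    rcases le_total (nzc c1 k) (nzc c2 k) with h | h
    · rw [min_eq_left h]
      have := h1.2.2.1 k
      rw [show ((fillNZ c1 a').take k).sum = psL (fillNZ c1 a') k from rfl,
        show (a.take k).sum = psL a k from rfl, psL_fillNZ] at this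
      exact this
    · rw [min_eq_right h]
      have := h2.2.2.1 k
      rw [show ((fillNZ c2 a').take k).sum = psL (fillNZ c2 a') k from rfl,
        show (a.take k).sum = psL a k from rfl, psL_fillNZ] at this
      exact this
  · intro k hk
    rcases le_total (nzc c1 k) (nzc c2 k) with h | h
    · rw [min_eq_left h]
      have := h1.2.2.2 k
      rw [show ((fillNZ c1 b').take k).sum = psL (fillNZ c1 b') k from rfl,
        show (b.take k).sum = psL b k from rfl, psL_fillNZ] at this
      exact this
    · rw [min_eq_right h]
      have := h2.2.2.2 k
      rw [show ((fillNZ c2 b').take k).sum = psL (fillNZ c2 b') k from rfl,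
        show (b.take k).sum = psL b k from rfl, psL_fillNZ] at this
      exact this

theorem bump_exists (hS : InS a b a' b') (ha : a.length = n) (hb : b.length = n) :
    ∃ c₀, c₀.length = n ∧ IsBump a b a' b' c₀ := by
  classical
  have hvpos := hS_vpos hS
  have hfin : {c | Cand n a b a' b' c}.Finite := by
    apply Set.Finite.subset (finite_bddList n (List.zipWith (· + ·) a' b').sum)
    rintro c hc
    refine ⟨le_of_eq hc.1, fun x hx => ?_⟩
    rcases Nat.eq_zero_or_pos x with h0 | h0
    · omega
    · have hxp : x ∈ posL c := by
        rw [posL]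
        exact List.mem_filter_of_mem hx (by simpa using Nat.pos_iff_ne_zero.mp h0)
      rw [hc.2.1] at hxp
      exact List.le_sum_of_mem hxp
  obtain ⟨cini, hcini⟩ := cand_nonempty hS ha hb
  obtain ⟨m, hm, hmin⟩ := Set.exists_min_image {c | Cand n a b a' b' c}
    (fun c => ∑ k ∈ Finset.range (n+1), nzc c k) hfin ⟨cini, hcini⟩
  have hkey : ∀ c ∈ {c | Cand n a b a' b' c}, ∀ k, nzc m k ≤ nzc c k := by
    intro c hc k
    obtain ⟨h12, hg12⟩ := cand_merge hS ha hb hm hc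
    have hnz : ∀ j, j ≤ n → nzc (ofG (List.zipWith (· + ·) a' b')
        (fun k => min (nzc m k) (nzc c k)) n) j = min (nzc m j) (nzc c j) :=
      fun j hj => nzc_ofG hvpos hg12 hj
    have hle : ∀ j ∈ Finset.range (n+1), nzc (ofG (List.zipWith (· + ·) a' b')
        (fun k => min (nzc m k) (nzc c k)) n) j ≤ nzc m j := by
      intro j hj
      rw [hnz j (Nat.lt_succ_iff.mp (Finset.mem_range.mp hj))]
      exact min_le_left _ _
    have hsum := hmin _ h12
    have heq := (Finset.sum_eq_sum_iff_of_le hle).mp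
      (le_antisymm (Finset.sum_le_sum hle) hsum)
    rcases le_or_gt k n with hk | hk
    · have h3 := heq k (Finset.mem_range.mpr (by omega))
      rw [hnz k hk] at h3
      omega
    · rw [cand_nzc_ge hS hm (le_of_lt hk), cand_nzc_ge hS hc (le_of_lt hk)]
  refine ⟨m, hm.1, hm.2.1, hm.2.2.1, hm.2.2.2, ?_⟩
  intro c' hc'1 hc'2 hc'3
  have htop : nzc c' n = (List.zipWith (· + ·) a' b').length :=
    cand_nzc_top hS ha hb hc'1 hc'2 hc'3
  have hg' : GoodG (List.zipWith (· + ·) a' b') n (fun k => nzc c' (min k n)) := by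
    refine ⟨by simp, fun i j hij => nzc_mono c' (by omega), fun k => ?_, ?_⟩
    · have t1 := nzc_succ_le c' (min k n)
      have t2 := nzc_mono c' (show min (k+1) n ≤ min k n + 1 by omega)
      show nzc c' (min (k+1) n) ≤ nzc c' (min k n) + 1
      omega
    · show nzc c' (min n n) = _
      rw [min_self, htop]
  have hcomp : Cand n a b a' b' (ofG (List.zipWith (· + ·) a' b')
      (fun k => nzc c' (min k n)) n) := by
    apply cand_ofG hS ha hb hg'
    · intro k hk
      have := hc'2 k
      rw [show ((fillNZ c' a').take k).sum = psL (fillNZ c' a') k from rfl,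
        show (a.take k).sum = psL a k from rfl, psL_fillNZ] at this
      show psL a k ≤ psL a' (nzc c' (min k n))
      rwa [min_eq_left hk]
    · intro k hk
      have := hc'3 k
      rw [show ((fillNZ c' b').take k).sum = psL (fillNZ c' b') k from rfl,
        show (b.take k).sum = psL b k from rfl, psL_fillNZ] at this
      show psL b k ≤ psL b' (nzc c' (min k n))
      rwa [min_eq_left hk]
  have hnzc'' : ∀ k, nzc (ofG (List.zipWith (· + ·) a' b')
      (fun k => nzc c' (min k n)) n) k = nzc c' k := by
    intro k
    rcases le_or_gt k n with hk | hk
    · rw [nzc_ofG hvpos hg' hk]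
      show nzc c' (min k n) = nzc c' k
      rw [min_eq_left hk]
    · rw [nzc_ofG_ge hvpos hg' (le_of_lt hk)]
      have t1 : nzc c' n ≤ nzc c' k := nzc_mono c' (le_of_lt hk)
      have t2 : nzc c' k ≤ (posL c').length := nzc_le_len_posL c' k
      rw [hc'1] at t2
      omega
  apply dom_of_nzc (by rw [hc'1, hm.2.1])
  intro k
  have hk2 := hkey _ hcomp k
  rw [hnzc'' k] at hk2
  exact hk2

/-- Uniqueness of the Bump among lists of a fixed length. -/
theorem bump_unique {a b a' b' c1 c2 : List ℕ} (h1 : IsBump a b a' b' c1)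
    (h2 : IsBump a b a' b' c2) (hl : c1.length = c2.length) : c1 = c2 :=
  dom_antisymm hl (h2.2.2.2 c1 h1.1 h1.2.1 h1.2.2.1)
    (h1.2.2.2 c2 h2.1 h2.2.1 h2.2.2.1)

end BumpSec
/-! ### Finset versions of the slide polynomial and the structure constants -/

def TS (n : ℕ) (c : List ℕ) : Set (List ℕ) :=
  {d | d.length = n ∧ DomL d c ∧ posL d = posL c}

lemma entry_bound {l m : List ℕ} (h : posL l = posL m) : ∀ x ∈ l, x ≤ m.sum := by
  intro x hx
  rcases Nat.eq_zero_or_pos x with h0 | h0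
  · omega
  · have hxp : x ∈ posL l := by
      rw [posL]
      exact List.mem_filter_of_mem hx (by simpa using Nat.pos_iff_ne_zero.mp h0)
    rw [h] at hxp
    calc x ≤ (posL m).sum := List.le_sum_of_mem hxp
      _ = m.sum := sum_posL m

lemma TS_finite (n : ℕ) (c : List ℕ) : (TS n c).Finite := by
  apply Set.Finite.subset (finite_bddList n c.sum)
  rintro d ⟨h1, _, h3⟩
  exact ⟨le_of_eq h1, entry_bound h3⟩

noncomputable def TF (n : ℕ) (c : List ℕ) : Finset (List ℕ) := (TS_finite n c).toFinset

lemma mem_TF {n : ℕ} {c d : List ℕ} :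
    d ∈ TF n c ↔ d.length = n ∧ DomL d c ∧ posL d = posL c := by
  simp [TF, TS, Set.Finite.mem_toFinset]

lemma MSlide_eq_sum (n : ℕ) (c : List ℕ) : MSlide n c = ∑ d ∈ TF n c, xlist n d := by
  have hset : ∀ d : List ℕ,
      (d.length = n ∧ DomL d c ∧ posL d = posL c) = (d ∈ (↑(TF n c) : Set (List ℕ))) := by
    intro d
    simp [mem_TF]
  rw [MSlide]
  simp only [hset]
  exact finsum_mem_coe_finset _ _

lemma xlist_mul {n : ℕ} {u w : List ℕ} (hu : u.length = n) (hw : w.length = n) :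
    xlist n u * xlist n w = xlist n (List.zipWith (· + ·) u w) := by
  rw [xlist, xlist, xlist, ← Finset.prod_mul_distrib]
  apply Finset.prod_congr rfl
  intro i _
  rw [← pow_add, getD_zipWith_add (by rw [hu]; exact i.isLt) (by rw [hw]; exact i.isLt)]

/-! ### the finite set of pairs -/

def SPset (a b : List ℕ) : Set (List ℕ × List ℕ) := {p | InS a b p.1 p.2}

lemma SPset_finite (a b : List ℕ) : (SPset a b).Finite := by
  apply Set.Finite.subset (Set.Finite.prod (finite_bddList a.length a.sum)
    (finite_bddList a.length b.sum))
  rintro ⟨a', b'⟩ hS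
  constructor
  · exact ⟨hS.2.1, entry_bound hS.2.2.1⟩
  · refine ⟨?_, entry_bound hS.2.2.2.1⟩
    have := hS.1
    have := hS.2.1
    simp only at *
    omega

noncomputable def SPF (a b : List ℕ) : Finset (List ℕ × List ℕ) := (SPset_finite a b).toFinset

lemma mem_SPF {a b : List ℕ} {p : List ℕ × List ℕ} : p ∈ SPF a b ↔ InS a b p.1 p.2 := by
  simp [SPF, SPset, Set.Finite.mem_toFinset]

/-! ### the bump function -/

noncomputable def bumpf (n : ℕ) (a b : List ℕ) (p : List ℕ × List ℕ) : List ℕ :=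
  letI := Classical.dec (∃ c, c.length = n ∧ IsBump a b p.1 p.2 c)
  if h : ∃ c, c.length = n ∧ IsBump a b p.1 p.2 c then h.choose else []

lemma bumpf_spec {n : ℕ} {a b : List ℕ} {p : List ℕ × List ℕ}
    (hS : InS a b p.1 p.2) (ha : a.length = n) (hb : b.length = n) :
    (bumpf n a b p).length = n ∧ IsBump a b p.1 p.2 (bumpf n a b p) := by
  have h : ∃ c, c.length = n ∧ IsBump a b p.1 p.2 c := bump_exists hS ha hb
  rw [bumpf]
  rw [dif_pos h]
  exact h.choose_spec

lemma bumpf_eq_iff {n : ℕ} {a b : List ℕ} {p : List ℕ × List ℕ}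
    (hS : InS a b p.1 p.2) (ha : a.length = n) (hb : b.length = n)
    {c : List ℕ} (hc : c.length = n) :
    IsBump a b p.1 p.2 c ↔ bumpf n a b p = c := by
  obtain ⟨hlen, hB⟩ := bumpf_spec hS ha hb
  constructor
  · intro h
    exact bump_unique hB h (by omega)
  · intro h
    exact h ▸ hB

lemma mult_eq {n : ℕ} {a b : List ℕ} (ha : a.length = n) (hb : b.length = n)
    {c : List ℕ} (hc : c.length = n) :
    ovSlideMult a b c = ((SPF a b).filter (fun p => bumpf n a b p = c)).card := by
  have h0 : ovSlideMult a b c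
      = Set.ncard {p : List ℕ × List ℕ | InS a b p.1 p.2 ∧ IsBump a b p.1 p.2 c} :=
    Nat.card_coe_set_eq _
  have hsetEq : {p : List ℕ × List ℕ | InS a b p.1 p.2 ∧ IsBump a b p.1 p.2 c}
      = ↑((SPF a b).filter (fun p => bumpf n a b p = c)) := by
    ext p
    simp only [Set.mem_setOf_eq, Finset.coe_filter, mem_SPF]
    constructor
    · rintro ⟨h1, h2⟩
      exact ⟨h1, (bumpf_eq_iff h1 ha hb hc).mp h2⟩
    · rintro ⟨h1, h2⟩
      exact ⟨h1, (bumpf_eq_iff h1 ha hb hc).mpr h2⟩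
  rw [h0, hsetEq, Set.ncard_coe_finset]
/-! ### the forward map on monomial data -/

lemma bound_of_posL_zip {a b a' b' : List ℕ} (hS : InS a b a' b') {c : List ℕ}
    (hp : posL c = List.zipWith (· + ·) a' b') : ∀ x ∈ c, x ≤ a.sum + b.sum := by
  intro x hx
  rcases Nat.eq_zero_or_pos x with h0 | h0
  · omega
  · have hxp : x ∈ posL c := by
      rw [posL]
      exact List.mem_filter_of_mem hx (by simpa using Nat.pos_iff_ne_zero.mp h0)
    rw [hp] at hxp
    have h1 : x ≤ (List.zipWith (· + ·) a' b').sum := List.le_sum_of_mem hxp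
    have h2 : (List.zipWith (· + ·) a' b').sum = a'.sum + b'.sum := sum_zipWith_add hS.1
    have h3 := hS_suma hS
    have h4 := hS_sumb hS
    omega

lemma key_forward {n : ℕ} {a b b1 b2 : List ℕ} (ha : a.length = n) (hb : b.length = n)
    (h11 : b1.length = n) (h12 : DomL b1 a) (h13 : posL b1 = posL a)
    (h21 : b2.length = n) (h22 : DomL b2 b) (h23 : posL b2 = posL b) :
    InS a b (extrNZ (List.zipWith (· + ·) b1 b2) b1)
      (extrNZ (List.zipWith (· + ·) b1 b2) b2) ∧
    List.zipWith (· + ·) (extrNZ (List.zipWith (· + ·) b1 b2) b1)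
      (extrNZ (List.zipWith (· + ·) b1 b2) b2) = posL (List.zipWith (· + ·) b1 b2) := by
  have hl : b1.length = b2.length := by omega
  have hcl : (List.zipWith (· + ·) b1 b2).length = b1.length := by simp [hl]
  have hz1 : ZC (List.zipWith (· + ·) b1 b2) b1 := zc_zipWith_left hl
  have hz2 : ZC (List.zipWith (· + ·) b1 b2) b2 := zc_zipWith_right hl
  have hlen1 : (extrNZ (List.zipWith (· + ·) b1 b2) b1).length
      = (posL (List.zipWith (· + ·) b1 b2)).length := length_extrNZ hcl
  have hlen2 : (extrNZ (List.zipWith (· + ·) b1 b2) b2).length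
      = (posL (List.zipWith (· + ·) b1 b2)).length := length_extrNZ (hcl.trans hl)
  have hkey : List.zipWith (· + ·) (extrNZ (List.zipWith (· + ·) b1 b2) b1)
      (extrNZ (List.zipWith (· + ·) b1 b2) b2) = posL (List.zipWith (· + ·) b1 b2) := by
    rw [extrNZ_zipWith hcl (hcl.trans hl), extrNZ_self]
  refine ⟨⟨hlen1.trans hlen2.symm, ?_, ?_, ?_, ?_, ?_, ?_⟩, hkey⟩
  · rw [hlen1, ha]
    calc (posL (List.zipWith (· + ·) b1 b2)).length
        ≤ (List.zipWith (· + ·) b1 b2).length := length_posL_le _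
      _ = n := by rw [hcl, h11]
  · rw [posL_extrNZ hz1, h13]
  · rw [posL_extrNZ hz2, h23]
  · exact DomL_trans h12 (dom_extrNZ hz1)
  · exact DomL_trans h22 (dom_extrNZ hz2)
  · intro i hi
    have hi2 : i < (extrNZ (List.zipWith (· + ·) b1 b2) b2).length := by omega
    have hgd := getD_zipWith_add hi hi2
    rw [hkey] at hgd
    have hne : (posL (List.zipWith (· + ·) b1 b2)).getD i 0 ≠ 0 :=
      getD_pos_of_lt_length_posL (by omega)
    omega

theorem mslide_mult' (n : ℕ) (a b : List ℕ) (ha : a.length = n) (hb : b.length = n) :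
    MSlide n a * MSlide n b =
      ∑ᶠ (c : List ℕ) (_ : c.length = n), (ovSlideMult a b c : ℤ) • MSlide n c := by
  classical
  have hUfin : {c : List ℕ | c.length = n ∧ ∀ x ∈ c, x ≤ a.sum + b.sum}.Finite :=
    Set.Finite.subset (finite_bddList n (a.sum + b.sum)) (fun c hc => ⟨le_of_eq hc.1, hc.2⟩)
  -- support of the outer finsum
  have hsupp : (Function.support fun c =>
      ∑ᶠ _ : c.length = n, (ovSlideMult a b c : ℤ) • MSlide n c) ⊆ ↑hUfin.toFinset := by
    intro c hc
    simp only [Function.mem_support] at hc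
    have hcn : c.length = n := by
      by_contra h
      rw [finsum_eq_if, if_neg h] at hc
      exact hc rfl
    have hmult : ovSlideMult a b c ≠ 0 := by
      intro h0
      rw [finsum_eq_if, if_pos hcn, h0] at hc
      simp at hc
    obtain ⟨⟨⟨p, hp1, hp2⟩⟩, -⟩ := Nat.card_ne_zero.mp hmult
    rw [Set.Finite.coe_toFinset]
    exact ⟨hcn, bound_of_posL_zip hp1 hp2.1⟩
  have hstep1 : (∑ᶠ (c : List ℕ) (_ : c.length = n), (ovSlideMult a b c : ℤ) • MSlide n c)
      = ∑ c ∈ hUfin.toFinset, (ovSlideMult a b c : ℤ) • MSlide n c := by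
    rw [finsum_eq_sum_of_support_subset _ hsupp]
    apply Finset.sum_congr rfl
    intro c hc
    rw [finsum_eq_if, if_pos (hUfin.mem_toFinset.mp hc).1]
  have hmaps : ∀ p ∈ SPF a b, bumpf n a b p ∈ hUfin.toFinset := by
    intro p hp
    have hS := mem_SPF.mp hp
    obtain ⟨hlen, hB⟩ := bumpf_spec hS ha hb
    rw [Set.Finite.mem_toFinset]
    exact ⟨hlen, bound_of_posL_zip hS hB.1⟩
  have hstep2 : (∑ c ∈ hUfin.toFinset, (ovSlideMult a b c : ℤ) • MSlide n c)
      = ∑ p ∈ SPF a b, MSlide n (bumpf n a b p) := by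
    rw [← Finset.sum_fiberwise_of_maps_to hmaps (fun p => MSlide n (bumpf n a b p))]
    apply Finset.sum_congr rfl
    intro c hc
    have hcn : c.length = n := (hUfin.mem_toFinset.mp hc).1
    have hinner : (∑ p ∈ (SPF a b).filter (fun p => bumpf n a b p = c),
        MSlide n (bumpf n a b p))
        = ∑ _p ∈ (SPF a b).filter (fun p => bumpf n a b p = c), MSlide n c :=
      Finset.sum_congr rfl (fun p hp => by rw [(Finset.mem_filter.mp hp).2])
    rw [hinner, Finset.sum_const, mult_eq ha hb hcn, natCast_zsmul]
  rw [hstep1, hstep2]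
  -- expand both sides into monomial sums
  have hstep3 : (∑ p ∈ SPF a b, MSlide n (bumpf n a b p))
      = ∑ x ∈ (SPF a b).sigma (fun p => TF n (bumpf n a b p)), xlist n x.2 := by
    rw [Finset.sum_sigma]
    exact Finset.sum_congr rfl (fun p _ => MSlide_eq_sum n (bumpf n a b p))
  rw [hstep3, MSlide_eq_sum n a, MSlide_eq_sum n b, Finset.sum_mul_sum,
    ← Finset.sum_product']
  -- the bijection
  apply Finset.sum_nbij'
    (i := fun q => ⟨(extrNZ (List.zipWith (· + ·) q.1 q.2) q.1,
      extrNZ (List.zipWith (· + ·) q.1 q.2) q.2), List.zipWith (· + ·) q.1 q.2⟩)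
    (j := fun x => (fillNZ x.2 x.1.1, fillNZ x.2 x.1.2))
  · -- i maps into the sigma set
    rintro ⟨b1, b2⟩ hq
    obtain ⟨hq1, hq2⟩ := Finset.mem_product.mp hq
    obtain ⟨h11, h12, h13⟩ := mem_TF.mp hq1
    obtain ⟨h21, h22, h23⟩ := mem_TF.mp hq2
    replace h11 : b1.length = n := h11
    replace h12 : DomL b1 a := h12
    replace h13 : posL b1 = posL a := h13
    replace h21 : b2.length = n := h21
    replace h22 : DomL b2 b := h22
    replace h23 : posL b2 = posL b := h23
    obtain ⟨hS, hkey⟩ := key_forward ha hb h11 h12 h13 h21 h22 h23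
    have hz1 : ZC (List.zipWith (· + ·) b1 b2) b1 := zc_zipWith_left (by omega)
    have hz2 : ZC (List.zipWith (· + ·) b1 b2) b2 := zc_zipWith_right (by omega)
    rw [Finset.mem_sigma]
    constructor
    · exact mem_SPF.mpr hS
    · obtain ⟨hlen, hB⟩ := bumpf_spec (p := (extrNZ (List.zipWith (· + ·) b1 b2) b1,
        extrNZ (List.zipWith (· + ·) b1 b2) b2)) hS ha hb
      rw [mem_TF]
      refine ⟨by simp; omega, ?_, ?_⟩
      · apply hB.2.2.2
        · rw [hkey]
        · rw [fillNZ_extrNZ hz1]; exact h12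
        · rw [fillNZ_extrNZ hz2]; exact h22
      · rw [hB.1, hkey]
  · -- j maps into the product set
    rintro ⟨⟨a', b'⟩, d⟩ hx
    obtain ⟨hp, hd⟩ := Finset.mem_sigma.mp hx
    have hS := mem_SPF.mp hp
    obtain ⟨hlen, hB⟩ := bumpf_spec hS ha hb
    obtain ⟨hd1, hd2, hd3⟩ := mem_TF.mp hd
    have hpos : posL d = List.zipWith (· + ·) a' b' := by rw [hd3, hB.1]
    have hlenv : (List.zipWith (· + ·) a' b').length = a'.length := hS_lenv hS
    have hnzle : ∀ k, nzc (bumpf n a b ((a',b'))) k ≤ nzc d k :=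
      nzc_le_of_dom hd3 hd2
    rw [Finset.mem_product]
    constructor
    · rw [mem_TF]
      refine ⟨by simp [hd1], ?_, ?_⟩
      · intro k
        have h1 := hB.2.1 k
        rw [show ((fillNZ (bumpf n a b ((a',b'))) a').take k).sum
            = psL (fillNZ (bumpf n a b ((a',b'))) a') k from rfl,
          show (a.take k).sum = psL a k from rfl, psL_fillNZ] at h1
        rw [show ((fillNZ d a').take k).sum = psL (fillNZ d a') k from rfl,
          show (a.take k).sum = psL a k from rfl, psL_fillNZ]
        exact h1.trans (psL_mono_k a' (hnzle k))
      · rw [posL_fillNZ (by rw [hpos, hlenv]), hS.2.2.1]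
    · rw [mem_TF]
      refine ⟨by simp [hd1], ?_, ?_⟩
      · intro k
        have h1 := hB.2.2.1 k
        rw [show ((fillNZ (bumpf n a b ((a',b'))) b').take k).sum
            = psL (fillNZ (bumpf n a b ((a',b'))) b') k from rfl,
          show (b.take k).sum = psL b k from rfl, psL_fillNZ] at h1
        rw [show ((fillNZ d b').take k).sum = psL (fillNZ d b') k from rfl,
          show (b.take k).sum = psL b k from rfl, psL_fillNZ]
        exact h1.trans (psL_mono_k b' (hnzle k))
      · rw [posL_fillNZ (by rw [hpos, hlenv, hS.1]), hS.2.2.2.1]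
  · -- left inverse
    rintro ⟨b1, b2⟩ hq
    obtain ⟨hq1, hq2⟩ := Finset.mem_product.mp hq
    have h11 : b1.length = n := (mem_TF.mp hq1).1
    have h21 : b2.length = n := (mem_TF.mp hq2).1
    have hz1 : ZC (List.zipWith (· + ·) b1 b2) b1 := zc_zipWith_left (by omega)
    have hz2 : ZC (List.zipWith (· + ·) b1 b2) b2 := zc_zipWith_right (by omega)
    simp only
    rw [fillNZ_extrNZ hz1, fillNZ_extrNZ hz2]
  · -- right inverse
    rintro ⟨⟨a', b'⟩, d⟩ hx
    obtain ⟨hp, hd⟩ := Finset.mem_sigma.mp hx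
    have hS := mem_SPF.mp hp
    obtain ⟨hlen, hB⟩ := bumpf_spec hS ha hb
    obtain ⟨hd1, hd2, hd3⟩ := mem_TF.mp hd
    have hpos : posL d = List.zipWith (· + ·) a' b' := by rw [hd3, hB.1]
    have hlenv : (List.zipWith (· + ·) a' b').length = a'.length := hS_lenv hS
    have hc : List.zipWith (· + ·) (fillNZ d a') (fillNZ d b') = d := by
      rw [fillNZ_zipWith hS.1, ← hpos, fillNZ_posL_self]
    simp only
    rw [hc, extrNZ_fillNZ (by rw [hpos, hlenv]),
      extrNZ_fillNZ (by rw [hpos, hlenv, hS.1])]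
  · -- values agree
    rintro ⟨b1, b2⟩ hq
    obtain ⟨hq1, hq2⟩ := Finset.mem_product.mp hq
    have h11 : b1.length = n := (mem_TF.mp hq1).1
    have h21 : b2.length = n := (mem_TF.mp hq2).1
    exact xlist_mul h11 h21


/-- For weak compositions `a`, `b` (of length `n`), the product of monomial slide
polynomials is `𝔐_a · 𝔐_b = ∑_c C_{a,b}^c 𝔐_c`, where `C_{a,b}^c` is the multiplicity of
`c` in the overlapping slide product `a ⧢_o b`.  In particular the monomial slide basis
has nonnegative integer structure coefficients. -/
theorem mslide_mult (n : ℕ) (a b : List ℕ) (ha : a.length = n) (hb : b.length = n) :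
    MSlide n a * MSlide n b =
      ∑ᶠ (c : List ℕ) (_ : c.length = n), (ovSlideMult a b c : ℤ) • MSlide n c :=
  mslide_mult' n a b ha hb
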